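/- arXiv:2509.15173 — 3 statements merged into one kernel-verified Lean document; each statement's English description precedes it below -/
import Mathlib

section
/- Let f : (0,∞) → (0,∞) be a Lebesgue-measurable function and suppose there exists a constant Γ ≥ 0 such that f(t₀) ≤ e^{Γ} f(t) whenever t₀ ≥ 1 and t₀ − 1 ≤ t ≤ t₀. If τ ∈ ℝ satisfies ∫₀^∞ e^{τ t} f(t) dt < ∞, then liminf_{t→∞} (−log f(t))/t ≥ τ. -/
open MeasureTheory Filter Set

/-- Let `f : (0,∞) → (0,∞)` be Lebesgue-measurable, and suppose there is `Γ ≥ 0` with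
`f t₀ ≤ e^Γ f t` whenever `t₀ ≥ 1` and `t₀ - 1 ≤ t ≤ t₀`.  If `τ ∈ ℝ` satisfies
`∫₀^∞ e^{τ t} f(t) dt < ∞`, then `liminf_{t→∞} (-log f(t))/t ≥ τ`. -/
theorem stmt1 (f : ℝ → ℝ)
    (hf_meas : AEMeasurable f (volume.restrict (Set.Ioi (0 : ℝ))))
    (hf_pos : ∀ t ∈ Set.Ioi (0 : ℝ), 0 < f t)
    (Γ : ℝ) (hΓ : 0 ≤ Γ)
    (hcomp : ∀ t₀ t : ℝ, 1 ≤ t₀ → t₀ - 1 ≤ t → t ≤ t₀ → f t₀ ≤ Real.exp Γ * f t)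
    (τ : ℝ)
    (hint : MeasureTheory.IntegrableOn (fun t => Real.exp (τ * t) * f t) (Set.Ioi (0 : ℝ))) :
    (τ : EReal) ≤
      Filter.liminf (fun t : ℝ => ((-Real.log (f t) / t : ℝ) : EReal)) Filter.atTop := by
  set M : ℝ := ∫ t in Set.Ioi (0 : ℝ), Real.exp (τ * t) * f t with hM
  set C : ℝ := Real.exp (Γ + |τ|) * M with hC
  -- key bound
  have key : ∀ t₀ : ℝ, 1 ≤ t₀ → f t₀ ≤ C * Real.exp (-(τ * t₀)) := by
    intro t₀ ht₀
    have hsub : Set.Ioc (t₀ - 1) t₀ ⊆ Set.Ioi (0 : ℝ) := by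
      intro x hx
      have : (0:ℝ) ≤ t₀ - 1 := by linarith
      exact lt_of_le_of_lt this hx.1
    have hfi : IntegrableOn (fun t => Real.exp (τ * t) * f t) (Set.Ioc (t₀ - 1) t₀) :=
      hint.mono_set hsub
    have hlow : ∀ t ∈ Set.Ioc (t₀ - 1) t₀,
        Real.exp (-Γ) * f t₀ * Real.exp (τ * t₀ - |τ|) ≤ Real.exp (τ * t) * f t := by
      intro t ht
      have h1 : f t₀ ≤ Real.exp Γ * f t := hcomp t₀ t ht₀ ht.1.le ht.2
      have hft : 0 < f t := hf_pos t (hsub ht)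
      have h2 : Real.exp (-Γ) * f t₀ ≤ f t := by
        rw [Real.exp_neg]
        rw [inv_mul_le_iff₀ (Real.exp_pos Γ)]
        exact h1
      have h3 : Real.exp (τ * t₀ - |τ|) ≤ Real.exp (τ * t) := by
        apply Real.exp_le_exp.2
        rcases le_or_gt 0 τ with hτ | hτ
        · have : τ * (t₀ - 1) ≤ τ * t := mul_le_mul_of_nonneg_left ht.1.le hτ
          rw [abs_of_nonneg hτ]; nlinarith
        · have : τ * t₀ ≤ τ * t := by nlinarith [ht.2]
          rw [abs_of_neg hτ]; nlinarith
      calc Real.exp (-Γ) * f t₀ * Real.exp (τ * t₀ - |τ|)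
          ≤ f t * Real.exp (τ * t) := by
            apply mul_le_mul h2 h3 (Real.exp_pos _).le hft.le
        _ = Real.exp (τ * t) * f t := mul_comm _ _
    have hmeasvol : (volume (Set.Ioc (t₀ - 1) t₀)).toReal = 1 := by
      rw [Real.volume_Ioc]; rw [ENNReal.toReal_ofReal (by linarith)]; ring
    have hI : Real.exp (-Γ) * f t₀ * Real.exp (τ * t₀ - |τ|)
        ≤ ∫ t in Set.Ioc (t₀ - 1) t₀, Real.exp (τ * t) * f t := by
      have := setIntegral_ge_of_const_le (μ := volume) measurableSet_Ioc
        (by rw [Real.volume_Ioc]; exact ENNReal.ofReal_ne_top) hlow hfi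
      rwa [measureReal_def, hmeasvol, one_smul] at this
    have hIM : (∫ t in Set.Ioc (t₀ - 1) t₀, Real.exp (τ * t) * f t) ≤ M := by
      apply setIntegral_mono_set hint
      · filter_upwards [ae_restrict_mem measurableSet_Ioi] with t ht
        exact (mul_pos (Real.exp_pos _) (hf_pos t ht)).le
      · exact HasSubset.Subset.eventuallyLE hsub
    have h4 : Real.exp (-Γ) * f t₀ * Real.exp (τ * t₀ - |τ|) ≤ M := le_trans hI hIM
    have : f t₀ * (Real.exp (-Γ) * Real.exp (τ * t₀ - |τ|)) ≤ M := by linarith [h4]; 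
    rw [hC]
    have hexp : Real.exp (-Γ) * Real.exp (τ * t₀ - |τ|)
        = (Real.exp (Γ + |τ|) * Real.exp (-(τ * t₀)))⁻¹ := by
      rw [← Real.exp_add, ← Real.exp_add, ← Real.exp_neg]; ring_nf
    rw [hexp] at this
    have hpos : 0 < Real.exp (Γ + |τ|) * Real.exp (-(τ * t₀)) :=
      mul_pos (Real.exp_pos _) (Real.exp_pos _)
    rw [mul_inv_le_iff₀ hpos] at this
    calc f t₀ ≤ Real.exp (Γ + |τ|) * Real.exp (-(τ * t₀)) * M := by linarith [this]
      _ = Real.exp (Γ + |τ|) * M * Real.exp (-(τ * t₀)) := by ring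
  have hf1 : 0 < f 1 := hf_pos 1 (by norm_num)
  have hCpos : 0 < C := by
    have h1 := key 1 le_rfl
    nlinarith [Real.exp_pos (-(τ * 1))]
  set K : ℝ := Real.log C with hK
  have hbound : ∀ t : ℝ, 1 ≤ t → τ - K / t ≤ -Real.log (f t) / t := by
    intro t ht
    have htpos : (0:ℝ) < t := by linarith
    have hft : 0 < f t := hf_pos t (by simpa using htpos)
    have hlog : Real.log (f t) ≤ K + -(τ * t) := by
      have := Real.log_le_log hft (key t ht)
      rwa [Real.log_mul (ne_of_gt hCpos) (ne_of_gt (Real.exp_pos _)), Real.log_exp] at this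
    have h5 : τ * t - K ≤ -Real.log (f t) := by linarith
    calc τ - K / t = (τ * t - K) / t := by field_simp
      _ ≤ -Real.log (f t) / t := by gcongr
  have hhtend : Filter.Tendsto (fun t : ℝ => ((τ - K / t : ℝ) : EReal)) Filter.atTop
      (nhds (τ : EReal)) := by
    rw [EReal.tendsto_coe]
    simpa using tendsto_const_nhds.sub (Filter.Tendsto.div_atTop
      (tendsto_const_nhds (x := K)) Filter.tendsto_id)
  have hlim : Filter.liminf (fun t : ℝ => ((τ - K / t : ℝ) : EReal)) Filter.atTop
      = (τ : EReal) := hhtend.liminf_eq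
  rw [← hlim]
  exact Filter.liminf_le_liminf (by
    filter_upwards [Filter.eventually_ge_atTop (1 : ℝ)] with t ht
    exact EReal.coe_le_coe_iff.2 (hbound t ht))
end

section
/- Let (X, μ) be a finite measure space with μ(X) > 0 and let β > 0. Let u, v : [0,∞) × X → ℝ be jointly measurable functions such that: (a) there exists γ ≥ 0 with |u(t,x) − u(s,x)| ≤ γ|t − s| for all s, t ≥ 0 and all x ∈ X; (b) for each x ∈ X the function t ↦ v(t,x) is nonincreasing; (c) for every t ≥ 0 the function x ↦ e^{β(v(t,x) − u(t,x))} is μ-integrable. Set f(t) := ∫_X e^{β(v(t,x) − u(t,x))} dμ(x) ∈ (0,∞). Then, as elements of [−∞,+∞], liminf_{t→∞} (−(1/t) log f(t)) = sup{ τ ∈ ℝ : ∫₀^∞ e^{τ t} f(t) dt < ∞ } (with sup ∅ = −∞). -/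
open MeasureTheory Filter Set

private lemma aux_main (f : ℝ → ℝ) (c : ℝ) (hc : 0 ≤ c)
    (hpos : ∀ t : ℝ, 0 ≤ t → 0 < f t)
    (hsub : ∀ s t : ℝ, 0 ≤ s → s ≤ t → f t ≤ Real.exp (c * (t - s)) * f s) :
    Filter.liminf (fun t : ℝ => ((-(1 / t) * Real.log (f t) : ℝ) : EReal)) Filter.atTop
      = sSup ((fun τ : ℝ => (τ : EReal)) ''
          {τ : ℝ | MeasureTheory.IntegrableOn
            (fun t => Real.exp (τ * t) * f t) (Set.Ioi (0 : ℝ))}) := by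
  -- log-submultiplicativity
  have hlog : ∀ s t : ℝ, 0 ≤ s → s ≤ t →
      Real.log (f t) ≤ c * (t - s) + Real.log (f s) := by
    intro s t hs hst
    have h1 := hsub s t hs hst
    have h2 : Real.log (f t) ≤ Real.log (Real.exp (c * (t - s)) * f s) :=
      Real.log_le_log (hpos t (hs.trans hst)) h1
    rwa [Real.log_mul (Real.exp_ne_zero _) (hpos s hs).ne', Real.log_exp] at h2
  -- measurable version of f
  set h : ℝ → ℝ := fun t => Real.log (f (max t 0)) - c * max t 0 with hh
  have hanti : Antitone h := by
    intro s t hst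
    have hs' : (0:ℝ) ≤ max s 0 := le_max_right _ _
    have hst' : max s 0 ≤ max t 0 := max_le_max hst le_rfl
    have := hlog (max s 0) (max t 0) hs' hst'
    simp only [hh]
    linarith
  have hG : Measurable (fun t : ℝ => Real.exp (c * max t 0 + h t)) := by
    have : Measurable h := hanti.measurable
    fun_prop
  have hfeq : ∀ t : ℝ, 0 < t → Real.exp (c * max t 0 + h t) = f t := by
    intro t ht
    have : max t 0 = t := max_eq_left ht.le
    rw [hh]
    simp only [this]
    rw [add_sub_cancel, Real.exp_log (hpos t ht.le)]
  -- a.e. strong measurability of the integrand on subsets of `Ioi 0`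
  have hasm : ∀ (τ : ℝ) (s : Set ℝ), MeasurableSet s → s ⊆ Set.Ioi (0:ℝ) →
      AEStronglyMeasurable (fun t => Real.exp (τ * t) * f t) (volume.restrict s) := by
    intro τ s hs hsub'
    have hm : Measurable fun t : ℝ => Real.exp (τ * t) * Real.exp (c * max t 0 + h t) :=
      ((measurable_const.mul measurable_id).exp).mul hG
    refine hm.aestronglyMeasurable.congr ?_
    filter_upwards [ae_restrict_mem hs] with t ht
    rw [hfeq t (hsub' ht)]
  set φ : ℝ → ℝ := fun t => -(1 / t) * Real.log (f t) with hφ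
  set S : Set ℝ := {τ : ℝ | MeasureTheory.IntegrableOn
      (fun t => Real.exp (τ * t) * f t) (Set.Ioi (0 : ℝ))} with hS
  -- Step 1 : τ ∈ S → (τ : EReal) ≤ liminf
  have step1 : ∀ τ : ℝ, τ ∈ S →
      (τ : EReal) ≤ Filter.liminf (fun t : ℝ => ((φ t : ℝ) : EReal)) Filter.atTop := by
    intro τ hτ
    set I : ℝ := ∫ t in Set.Ioi (0:ℝ), Real.exp (τ * t) * f t with hI
    set C : ℝ := max (I * Real.exp (c + |τ|)) 1 with hC
    have hC1 : (1:ℝ) ≤ C := le_max_right _ _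
    have hCpos : 0 < C := lt_of_lt_of_le one_pos hC1
    have key : ∀ t : ℝ, 1 ≤ t → f t ≤ C * Real.exp (-τ * t) := by
      intro t ht
      have ht0 : (0:ℝ) ≤ t - 1 := by linarith
      have hIoc : Set.Ioc (t-1) t ⊆ Set.Ioi (0:ℝ) := by
        intro s hs; exact lt_of_le_of_lt ht0 hs.1
      have hlow : ∀ s ∈ Set.Ioc (t-1) t,
          f t * Real.exp (τ * t - c - |τ|) ≤ Real.exp (τ * s) * f s := by
        intro s hs
        obtain ⟨hs1, hs2⟩ := hs
        have hs0 : (0:ℝ) ≤ s := le_of_lt (lt_of_le_of_lt ht0 hs1)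
        have hts0 : (0:ℝ) ≤ t - s := by linarith
        have hts1 : t - s ≤ 1 := by linarith
        have h1 : f t ≤ Real.exp (c * (t - s)) * f s := hsub s t hs0 hs2
        have h2 : f s ≥ f t * Real.exp (-(c * (t - s))) := by
          rw [ge_iff_le, ← Real.exp_log (hpos t (le_trans (by linarith) ht)),
              ← Real.exp_add]
          calc Real.exp (Real.log (f t) + -(c * (t - s)))
              ≤ Real.exp (c * (t - s) + Real.log (f s) + -(c * (t - s))) := by
                apply Real.exp_le_exp.mpr; have := hlog s t hs0 hs2; linarith
            _ = f s := by rw [add_comm (c * (t-s)), add_assoc, add_neg_cancel, add_zero,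
                Real.exp_log (hpos s hs0)]
        have h3 : τ * t - |τ| ≤ τ * s := by
          have habs : τ * (t - s) ≤ |τ| := by
            calc τ * (t - s) ≤ |τ| * (t - s) := mul_le_mul_of_nonneg_right (le_abs_self τ) hts0
              _ ≤ |τ| * 1 := mul_le_mul_of_nonneg_left hts1 (abs_nonneg τ)
              _ = |τ| := mul_one _
          nlinarith [habs]
        have h4 : -(c * (t - s)) ≥ -c := by nlinarith
        calc f t * Real.exp (τ * t - c - |τ|)
            = Real.exp (τ * t - |τ|) * (f t * Real.exp (-c)) := by
              rw [show τ * t - c - |τ| = (τ * t - |τ|) + (-c) by ring, Real.exp_add]; ring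
          _ ≤ Real.exp (τ * s) * (f t * Real.exp (-(c * (t - s)))) := by
              apply mul_le_mul (Real.exp_le_exp.mpr h3)
                (mul_le_mul_of_nonneg_left (Real.exp_le_exp.mpr h4) (hpos t (by linarith)).le)
                (mul_nonneg (hpos t (by linarith)).le (Real.exp_pos _).le)
                (Real.exp_pos _).le
          _ ≤ Real.exp (τ * s) * f s := by
              exact mul_le_mul_of_nonneg_left h2 (Real.exp_pos _).le
      have hint1 : IntegrableOn (fun t => Real.exp (τ * t) * f t) (Set.Ioc (t-1) t) volume :=
        hτ.mono_set hIoc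
      have hge := setIntegral_ge_of_const_le (μ := volume) measurableSet_Ioc
        (by simp [Real.volume_Ioc]) hlow hint1
      have hvol : ((volume (Set.Ioc (t-1) t)).toReal : ℝ) = 1 := by
        rw [Real.volume_Ioc]; simp
      rw [measureReal_def, hvol, one_smul] at hge
      have hle : (∫ s in Set.Ioc (t-1) t, Real.exp (τ * s) * f s) ≤ I := by
        apply setIntegral_mono_set hτ
        · filter_upwards [ae_restrict_mem measurableSet_Ioi] with s hs
          exact le_of_lt (mul_pos (Real.exp_pos _) (hpos s (le_of_lt hs)))
        · exact HasSubset.Subset.eventuallyLE hIoc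
      have hft : f t * Real.exp (τ * t - c - |τ|) ≤ I := le_trans hge hle
      have : f t ≤ I * Real.exp (c + |τ|) * Real.exp (-τ * t) := by
        have hexp : Real.exp (τ * t - c - |τ|) * (Real.exp (c + |τ|) * Real.exp (-τ * t)) = 1 := by
          rw [← Real.exp_add, ← Real.exp_add, ← Real.exp_zero]; ring_nf
        have hmul := mul_le_mul_of_nonneg_right hft
          (mul_nonneg (Real.exp_pos (c + |τ|)).le (Real.exp_pos (-τ * t)).le)
        calc f t = f t * Real.exp (τ * t - c - |τ|) * (Real.exp (c + |τ|) * Real.exp (-τ * t)) := by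
              rw [mul_assoc, hexp, mul_one]
          _ ≤ I * (Real.exp (c + |τ|) * Real.exp (-τ * t)) := hmul
          _ = I * Real.exp (c + |τ|) * Real.exp (-τ * t) := by ring
      exact le_trans this (mul_le_mul_of_nonneg_right (le_max_left _ _) (Real.exp_pos _).le)
    have hev : ∀ᶠ t : ℝ in atTop, ((τ - Real.log C / t : ℝ) : EReal) ≤ ((φ t : ℝ) : EReal) := by
      filter_upwards [eventually_ge_atTop (1:ℝ)] with t ht
      rw [EReal.coe_le_coe_iff]
      have ht0 : (0:ℝ) < t := lt_of_lt_of_le one_pos ht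
      have h1 : Real.log (f t) ≤ Real.log C + (-τ * t) := by
        have := Real.log_le_log (hpos t ht0.le) (key t ht)
        rwa [Real.log_mul hCpos.ne' (Real.exp_ne_zero _), Real.log_exp] at this
      have h2 : -(1/t) * Real.log (f t) ≥ -(1/t) * (Real.log C + (-τ * t)) := by
        apply mul_le_mul_of_nonpos_left h1
        have : (0:ℝ) < 1 / t := by positivity
        linarith
      have h3 : -(1/t) * (Real.log C + (-τ * t)) = τ - Real.log C / t := by
        field_simp
        ring
      rw [hφ]; simp only []; linarith [h2, h3.symm.le]
    have htend : Filter.Tendsto (fun t : ℝ => ((τ - Real.log C / t : ℝ) : EReal)) atTop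
        (nhds (τ : EReal)) := by
      have h0 : Filter.Tendsto (fun t : ℝ => τ - Real.log C / t) atTop (nhds τ) := by
        have := (tendsto_const_nhds (x := Real.log C) (f := atTop (α := ℝ))).div_atTop
          tendsto_id
        simpa using tendsto_const_nhds.sub this
      exact (continuous_coe_real_ereal.tendsto _).comp h0
    calc (τ : EReal) = Filter.liminf (fun t : ℝ => ((τ - Real.log C / t : ℝ) : EReal)) atTop :=
          (htend.liminf_eq).symm
      _ ≤ Filter.liminf (fun t : ℝ => ((φ t : ℝ) : EReal)) atTop :=
          liminf_le_liminf hev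
  -- Step 2 : (τ : EReal) < liminf → τ ∈ S
  have step2 : ∀ τ : ℝ,
      (τ : EReal) < Filter.liminf (fun t : ℝ => ((φ t : ℝ) : EReal)) Filter.atTop → τ ∈ S := by
    intro τ hτ
    obtain ⟨τ', hττ', hτ'L⟩ := EReal.exists_between_coe_real hτ
    have hev : ∀ᶠ t : ℝ in atTop, (τ' : EReal) < ((φ t : ℝ) : EReal) :=
      eventually_lt_of_lt_liminf hτ'L
    rw [eventually_atTop] at hev
    obtain ⟨T₀, hT₀⟩ := hev
    set T : ℝ := max T₀ 1 with hT
    have hT1 : (1:ℝ) ≤ T := le_max_right _ _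
    have hTpos : (0:ℝ) < T := lt_of_lt_of_le one_pos hT1
    have hbound : ∀ t : ℝ, T ≤ t → Real.exp (τ * t) * f t ≤ Real.exp (-(τ' - τ) * t) := by
      intro t ht
      have ht0 : (0:ℝ) < t := lt_of_lt_of_le hTpos ht
      have h1 : τ' < φ t := by
        have := hT₀ t (le_trans (le_max_left _ _) ht)
        exact_mod_cast this
      have h2 : Real.log (f t) < -τ' * t := by
        rw [hφ] at h1; simp only [] at h1
        have := mul_lt_mul_of_pos_left h1 ht0
        rw [mul_comm t (-(1/t) * Real.log (f t))] at this
        have heq : -(1/t) * Real.log (f t) * t = -Real.log (f t) := by field_simp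
        nlinarith [heq]
      have h3 : f t ≤ Real.exp (-τ' * t) := by
        rw [← Real.exp_log (hpos t ht0.le)]
        exact (Real.exp_le_exp.mpr h2.le)
      calc Real.exp (τ * t) * f t ≤ Real.exp (τ * t) * Real.exp (-τ' * t) :=
            mul_le_mul_of_nonneg_left h3 (Real.exp_pos _).le
        _ = Real.exp (-(τ' - τ) * t) := by rw [← Real.exp_add]; ring_nf
    rw [hS, Set.mem_setOf_eq, show Set.Ioi (0:ℝ) = Set.Ioc 0 T ∪ Set.Ioi T from
      (Set.Ioc_union_Ioi_eq_Ioi hTpos.le).symm]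
    apply MeasureTheory.IntegrableOn.union
    · -- bounded on `Ioc 0 T`
      refine ⟨hasm τ _ measurableSet_Ioc Set.Ioc_subset_Ioi_self, ?_⟩
      apply HasFiniteIntegral.restrict_of_bounded
        (C := Real.exp (|τ| * T) * (Real.exp (c * T) * f 0))
      · rw [Real.volume_Ioc]; exact ENNReal.ofReal_lt_top
      · rw [ae_restrict_iff' measurableSet_Ioc]
        filter_upwards with t htmem
        have ht0 : (0:ℝ) < t := htmem.1
        have htT : t ≤ T := htmem.2
        rw [Real.norm_eq_abs, abs_of_nonneg
          (mul_nonneg (Real.exp_pos _).le (hpos t ht0.le).le)]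
        have h1 : Real.exp (τ * t) ≤ Real.exp (|τ| * T) := by
          apply Real.exp_le_exp.mpr
          calc τ * t ≤ |τ * t| := le_abs_self _
            _ = |τ| * |t| := abs_mul _ _
            _ ≤ |τ| * T := mul_le_mul_of_nonneg_left
                (by rw [abs_of_nonneg ht0.le]; exact htT) (abs_nonneg _)
        have h2 : f t ≤ Real.exp (c * T) * f 0 := by
          calc f t ≤ Real.exp (c * (t - 0)) * f 0 := hsub 0 t le_rfl ht0.le
            _ ≤ Real.exp (c * T) * f 0 := by
                apply mul_le_mul_of_nonneg_right _ (hpos 0 le_rfl).le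
                apply Real.exp_le_exp.mpr
                nlinarith
        exact mul_le_mul h1 h2 (hpos t ht0.le).le (Real.exp_pos _).le
    · -- dominated by a decaying exponential on `Ioi T`
      have hdec : IntegrableOn (fun t : ℝ => Real.exp (-(τ' - τ) * t)) (Set.Ioi T) volume :=
        exp_neg_integrableOn_Ioi T (by exact_mod_cast sub_pos.mpr (EReal.coe_lt_coe_iff.mp hττ'))
      apply Integrable.mono hdec (hasm τ _ measurableSet_Ioi
        (Set.Ioi_subset_Ioi hTpos.le))
      rw [ae_restrict_iff' measurableSet_Ioi]
      filter_upwards with t ht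
      have ht0 : (0:ℝ) < t := lt_trans hTpos ht
      rw [Real.norm_eq_abs, abs_of_nonneg
        (mul_nonneg (Real.exp_pos _).le (hpos t ht0.le).le),
        Real.norm_eq_abs, abs_of_nonneg (Real.exp_pos _).le]
      exact hbound t ht.le
  -- combine
  apply le_antisymm
  · by_contra hcon
    push_neg at hcon
    obtain ⟨τ, h1, h2⟩ := EReal.exists_between_coe_real hcon
    have := step2 τ h2
    have hmem : (τ : EReal) ∈ (fun τ : ℝ => (τ : EReal)) '' S := ⟨τ, this, rfl⟩
    exact absurd (le_sSup hmem) (not_le.mpr h1)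
  · apply sSup_le
    rintro x ⟨τ, hτ, rfl⟩
    exact step1 τ hτ
/-- Measure-theoretic form of the slope/integrability-threshold formula.
`(X, μ)` is a finite measure space with `μ(X) > 0`, `β > 0`, and `u, v` are jointly
measurable on `[0,∞) × X` with `u` uniformly Lipschitz in `t`, `v` nonincreasing in `t`,
and `x ↦ exp(β (v t x - u t x))` integrable for each `t ≥ 0`.  Setting
`f t := ∫_X exp(β (v t x - u t x)) dμ`, one has, in `[-∞,∞]`,
`liminf_{t→∞} (-(1/t) log f(t)) = sup { τ ∈ ℝ : ∫₀^∞ e^{τ t} f(t) dt < ∞ }`. -/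
theorem stmt3 {X : Type*} [MeasurableSpace X] (μ : MeasureTheory.Measure X)
    [MeasureTheory.IsFiniteMeasure μ] (hμ : 0 < μ Set.univ)
    (β : ℝ) (hβ : 0 < β)
    (u v : ℝ → X → ℝ)
    (hu_meas : AEMeasurable (fun p : ℝ × X => u p.1 p.2)
      ((volume.restrict (Set.Ici (0 : ℝ))).prod μ))
    (hv_meas : AEMeasurable (fun p : ℝ × X => v p.1 p.2)
      ((volume.restrict (Set.Ici (0 : ℝ))).prod μ))
    (γ : ℝ) (hγ : 0 ≤ γ)
    (hLip : ∀ s t : ℝ, 0 ≤ s → 0 ≤ t → ∀ x : X, |u t x - u s x| ≤ γ * |t - s|)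
    (hmono : ∀ x : X, ∀ s t : ℝ, 0 ≤ s → s ≤ t → v t x ≤ v s x)
    (hint : ∀ t : ℝ, 0 ≤ t →
      MeasureTheory.Integrable (fun x => Real.exp (β * (v t x - u t x))) μ) :
    Filter.liminf
        (fun t : ℝ =>
          ((-(1 / t) * Real.log (∫ x, Real.exp (β * (v t x - u t x)) ∂μ) : ℝ) : EReal))
        Filter.atTop
      = sSup ((fun τ : ℝ => (τ : EReal)) ''
          {τ : ℝ | MeasureTheory.IntegrableOn
            (fun t => Real.exp (τ * t) * ∫ x, Real.exp (β * (v t x - u t x)) ∂μ)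
            (Set.Ioi (0 : ℝ))}) := by
  haveI : NeZero μ := ⟨by rwa [← MeasureTheory.Measure.measure_univ_pos]⟩
  have hpos : ∀ t : ℝ, 0 ≤ t → 0 < ∫ x, Real.exp (β * (v t x - u t x)) ∂μ :=
    fun t ht => MeasureTheory.integral_exp_pos (hint t ht)
  have hsub : ∀ s t : ℝ, 0 ≤ s → s ≤ t →
      (∫ x, Real.exp (β * (v t x - u t x)) ∂μ)
        ≤ Real.exp (β * γ * (t - s)) * ∫ x, Real.exp (β * (v s x - u s x)) ∂μ := by
    intro s t hs hst
    have hpt : ∀ x : X, Real.exp (β * (v t x - u t x))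
        ≤ Real.exp (β * γ * (t - s)) * Real.exp (β * (v s x - u s x)) := by
      intro x
      rw [← Real.exp_add]
      apply Real.exp_le_exp.mpr
      have h1 : v t x ≤ v s x := hmono x s t hs hst
      have h2 : u s x - u t x ≤ γ * (t - s) := by
        have := hLip s t hs (hs.trans hst) x
        rw [abs_of_nonneg (by linarith : (0:ℝ) ≤ t - s)] at this
        have h3 := neg_abs_le (u t x - u s x)
        linarith [abs_nonneg (u t x - u s x), this, h3]
      nlinarith
    calc (∫ x, Real.exp (β * (v t x - u t x)) ∂μ)
        ≤ ∫ x, Real.exp (β * γ * (t - s)) * Real.exp (β * (v s x - u s x)) ∂μ :=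
          MeasureTheory.integral_mono (hint t (hs.trans hst))
            ((hint s hs).const_mul _) hpt
      _ = Real.exp (β * γ * (t - s)) * ∫ x, Real.exp (β * (v s x - u s x)) ∂μ :=
          MeasureTheory.integral_const_mul _ _
  exact aux_main (fun t => ∫ x, Real.exp (β * (v t x - u t x)) ∂μ) (β * γ)
    (mul_nonneg hβ.le hγ) hpos hsub
end

section
/- Let (M, d) be a metric space with basepoint o ∈ M, C > 0, α ∈ (0,1], and F : M → ℝ satisfying |F(x) − F(y)| ≤ C ( d(x,y)^α · max(d(o,x), d(o,y))^{1−α} + d(x,y) ) for all x, y ∈ M. Let A > 0, let u : (0,∞) → M and, for each m ∈ ℕ, u_m : (0,∞) → M be curves with d(o, u(t)) ≤ A t and d(o, u_m(t)) ≤ A t for all t > 0 and all m. If limsup_{t→∞} d(u_m(t), u(t))/t → 0 as m → ∞, then liminf_{t→∞} F(u_m(t))/t → liminf_{t→∞} F(u(t))/t as m → ∞. -/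
open MeasureTheory Filter Set

private lemma stmt5_small (C A α : ℝ) (hC : 0 < C) (hA : 0 < A) (hα0 : 0 < α)
    {ε : ℝ} (hε : 0 < ε) :
    ∃ x0 > 0, ∀ x : ℝ, 0 ≤ x → x ≤ x0 → C * (x ^ α * A ^ (1 - α) + x) ≤ ε := by
  have hAp : (0:ℝ) < A ^ (1 - α) := Real.rpow_pos_of_pos hA _
  set y : ℝ := ε / (2 * C * A ^ (1 - α)) with hy
  have hy0 : 0 < y := by positivity
  refine ⟨min (y ^ (1/α)) (ε / (2 * C)), lt_min (Real.rpow_pos_of_pos hy0 _) (by positivity),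
    fun x hx0 hx1 => ?_⟩
  have h1 : x ≤ y ^ (1/α) := hx1.trans (min_le_left _ _)
  have h2 : x ≤ ε / (2 * C) := hx1.trans (min_le_right _ _)
  have hxa : x ^ α ≤ y := by
    have := Real.rpow_le_rpow hx0 h1 hα0.le
    rwa [← Real.rpow_mul hy0.le, one_div, inv_mul_cancel₀ hα0.ne', Real.rpow_one] at this
  have hb1 : C * (x ^ α * A ^ (1 - α)) ≤ ε / 2 := by
    have : x ^ α * A ^ (1 - α) ≤ y * A ^ (1 - α) :=
      mul_le_mul_of_nonneg_right hxa hAp.le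
    calc C * (x ^ α * A ^ (1 - α)) ≤ C * (y * A ^ (1 - α)) :=
          mul_le_mul_of_nonneg_left this hC.le
      _ = ε / 2 := by rw [hy]; field_simp
  have hb2 : C * x ≤ ε / 2 := by
    calc C * x ≤ C * (ε / (2 * C)) := mul_le_mul_of_nonneg_left h2 hC.le
      _ = ε / 2 := by field_simp
  nlinarith

/-- Sequential-continuity form: if curves `u_m` converge to `u` in the chordal sense
(`limsup_{t→∞} d(u_m t, u t)/t → 0` as `m → ∞`), then for any `F` satisfying the
Hölder-type estimate, the radial slopes converge:
`liminf_{t→∞} F(u_m t)/t → liminf_{t→∞} F(u t)/t`. -/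
theorem stmt5 {M : Type*} [MetricSpace M] (o : M) (C : ℝ) (hC : 0 < C)
    (α : ℝ) (hα0 : 0 < α) (hα1 : α ≤ 1)
    (F : M → ℝ)
    (hF : ∀ x y : M, |F x - F y| ≤
      C * (dist x y ^ α * (max (dist o x) (dist o y)) ^ (1 - α) + dist x y))
    (A : ℝ) (hA : 0 < A)
    (u : ℝ → M) (useq : ℕ → ℝ → M)
    (hu : ∀ t : ℝ, 0 < t → dist o (u t) ≤ A * t)
    (huseq : ∀ m : ℕ, ∀ t : ℝ, 0 < t → dist o (useq m t) ≤ A * t)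
    (hconv : Filter.Tendsto
      (fun m : ℕ => Filter.limsup (fun t : ℝ => dist (useq m t) (u t) / t) Filter.atTop)
      Filter.atTop (nhds 0)) :
    Filter.Tendsto
      (fun m : ℕ =>
        Filter.liminf (fun t : ℝ => ((F (useq m t) / t : ℝ) : EReal)) Filter.atTop)
      Filter.atTop
      (nhds (Filter.liminf (fun t : ℝ => ((F (u t) / t : ℝ) : EReal)) Filter.atTop)) := by
  -- pointwise bound on |F|
  have hFx : ∀ x : M, |F x| ≤ |F o| + 2 * C * dist o x := by
    intro x
    have h := hF x o
    have hd : (0:ℝ) ≤ dist o x := dist_nonneg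
    rw [dist_self, max_eq_left hd, dist_comm x o] at h
    have hpow : dist o x ^ α * dist o x ^ (1 - α) = dist o x := by
      rw [← Real.rpow_add_of_nonneg hd hα0.le (by linarith)]
      simp
    rw [hpow] at h
    have := abs_sub_abs_le_abs_sub (F x) (F o)
    nlinarith
  set B : ℝ := |F o| + 2 * C * A with hBdef
  set g : ℝ → ℝ := fun t => F (u t) / t with hg
  set gm : ℕ → ℝ → ℝ := fun m t => F (useq m t) / t with hgm
  -- eventual bounds
  have habs : ∀ (v : ℝ → M), (∀ t : ℝ, 0 < t → dist o (v t) ≤ A * t) →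
      ∀ᶠ t : ℝ in atTop, |F (v t) / t| ≤ B := by
    intro v hv
    filter_upwards [eventually_ge_atTop (1:ℝ)] with t ht
    have ht0 : (0:ℝ) < t := lt_of_lt_of_le one_pos ht
    have h1 : |F (v t)| ≤ |F o| + 2 * C * (A * t) := by
      have := hFx (v t)
      nlinarith [hv t ht0, dist_nonneg (x := o) (y := v t)]
    rw [abs_div, abs_of_pos ht0, div_le_iff₀ ht0]
    have hFo : |F o| ≤ |F o| * t := le_mul_of_one_le_right (abs_nonneg _) ht
    nlinarith
  have hgB : ∀ᶠ t : ℝ in atTop, |g t| ≤ B := habs u hu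
  have hgmB : ∀ m, ∀ᶠ t : ℝ in atTop, |gm m t| ≤ B := fun m => habs (useq m) (huseq m)
  -- boundedness facts
  have hbdd_le : ∀ (f : ℝ → ℝ), (∀ᶠ t : ℝ in atTop, |f t| ≤ B) →
      IsBoundedUnder (· ≤ ·) atTop f :=
    fun f hf => ⟨B, eventually_map.mpr (hf.mono fun t ht => (abs_le.1 ht).2)⟩
  have hbdd_ge : ∀ (f : ℝ → ℝ), (∀ᶠ t : ℝ in atTop, |f t| ≤ B) →
      IsBoundedUnder (· ≥ ·) atTop f :=
    fun f hf => ⟨-B, eventually_map.mpr (hf.mono fun t ht => (abs_le.1 ht).1)⟩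
  have hcob : ∀ (f : ℝ → ℝ), (∀ᶠ t : ℝ in atTop, |f t| ≤ B) →
      IsCoboundedUnder (· ≥ ·) atTop f :=
    fun f hf => (hbdd_le f hf).isCoboundedUnder_ge
  -- EReal liminf = coe of real liminf
  have hcoe : ∀ (f : ℝ → ℝ), (∀ᶠ t : ℝ in atTop, |f t| ≤ B) →
      Filter.liminf (fun t : ℝ => ((f t : ℝ) : EReal)) atTop
        = ((Filter.liminf f atTop : ℝ) : EReal) := by
    intro f hf
    have := Monotone.map_liminf_of_continuousAt (F := atTop) (f := fun x : ℝ => (x : EReal))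
      EReal.coe_strictMono.monotone f (continuous_coe_real_ereal.continuousAt)
      (hcob f hf) (hbdd_ge f hf)
    simpa [Function.comp_def] using this.symm
  set L : ℝ := Filter.liminf g atTop with hL
  set Lm : ℕ → ℝ := fun m => Filter.liminf (gm m) atTop with hLm
  -- main quantitative step
  have hmain : ∀ ε : ℝ, 0 < ε → ∀ᶠ m : ℕ in atTop, |Lm m - L| ≤ ε := by
    intro ε hε
    obtain ⟨x0, hx0, hx0p⟩ := stmt5_small C A α hC hA hα0 hε
    have hlim : ∀ᶠ m : ℕ in atTop,
        Filter.limsup (fun t : ℝ => dist (useq m t) (u t) / t) atTop < x0 :=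
      hconv.eventually_lt_const hx0
    filter_upwards [hlim] with m hm
    -- boundedness of the distance quotients
    have hdbd : IsBoundedUnder (· ≤ ·) atTop
        (fun t : ℝ => dist (useq m t) (u t) / t) := by
      refine ⟨2 * A, eventually_map.mpr ?_⟩
      filter_upwards [eventually_ge_atTop (1:ℝ)] with t ht
      have ht0 : (0:ℝ) < t := lt_of_lt_of_le one_pos ht
      have hd : dist (useq m t) (u t) ≤ 2 * A * t := by
        have h1 := huseq m t ht0
        have h2 := hu t ht0
        have := dist_triangle (useq m t) o (u t)
        rw [dist_comm (useq m t) o] at this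
        linarith
      rw [div_le_iff₀ ht0]
      linarith
    have hev : ∀ᶠ t : ℝ in atTop, dist (useq m t) (u t) / t < x0 :=
      eventually_lt_of_limsup_lt hm hdbd
    -- eventual estimate between gm m and g
    have hest : ∀ᶠ t : ℝ in atTop, |gm m t - g t| ≤ ε := by
      filter_upwards [hev, eventually_ge_atTop (1:ℝ)] with t hs ht
      have ht0 : (0:ℝ) < t := lt_of_lt_of_le one_pos ht
      have hd0 : (0:ℝ) ≤ dist (useq m t) (u t) := dist_nonneg
      set s : ℝ := dist (useq m t) (u t) / t with hs'
      have hs0 : (0:ℝ) ≤ s := div_nonneg hd0 ht0.le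
      have hF1 : |F (useq m t) - F (u t)| ≤
          C * (dist (useq m t) (u t) ^ α * (A * t) ^ (1 - α) + dist (useq m t) (u t)) := by
        refine (hF (useq m t) (u t)).trans ?_
        have hmax : max (dist o (useq m t)) (dist o (u t)) ≤ A * t :=
          max_le (huseq m t ht0) (hu t ht0)
        have hmax0 : (0:ℝ) ≤ max (dist o (useq m t)) (dist o (u t)) :=
          le_max_of_le_left dist_nonneg
        have hpow : (max (dist o (useq m t)) (dist o (u t))) ^ (1 - α)
            ≤ (A * t) ^ (1 - α) := Real.rpow_le_rpow hmax0 hmax (by linarith)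
        have hda : (0:ℝ) ≤ dist (useq m t) (u t) ^ α := Real.rpow_nonneg hd0 α
        nlinarith [mul_le_mul_of_nonneg_left hpow hda]
      -- rewrite the RHS as (C * (s^α * A^(1-α) + s)) * t
      have hkey : C * (dist (useq m t) (u t) ^ α * (A * t) ^ (1 - α) + dist (useq m t) (u t))
          = C * (s ^ α * A ^ (1 - α) + s) * t := by
        have hta : (0:ℝ) < t ^ α := Real.rpow_pos_of_pos ht0 α
        have h1 : s ^ α = dist (useq m t) (u t) ^ α / t ^ α := by
          rw [hs']; exact Real.div_rpow hd0 ht0.le α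
        have h2 : (A * t) ^ (1 - α) = A ^ (1 - α) * t ^ (1 - α) :=
          Real.mul_rpow hA.le ht0.le
        have h3 : t ^ (1 - α) = t / t ^ α := by
          rw [Real.rpow_sub ht0, Real.rpow_one]
        rw [h1, h2, h3, hs']
        field_simp
      have hsx : s ≤ x0 := le_of_lt hs
      have hfin : C * (s ^ α * A ^ (1 - α) + s) ≤ ε := hx0p s hs0 hsx
      have habseq : |gm m t - g t| = |F (useq m t) - F (u t)| / t := by
        rw [hgm, hg]
        rw [div_sub_div_same, abs_div, abs_of_pos ht0]
      rw [habseq, div_le_iff₀ ht0]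
      calc |F (useq m t) - F (u t)|
          ≤ C * (dist (useq m t) (u t) ^ α * (A * t) ^ (1 - α) + dist (useq m t) (u t)) := hF1
        _ = C * (s ^ α * A ^ (1 - α) + s) * t := hkey
        _ ≤ ε * t := mul_le_mul_of_nonneg_right hfin ht0.le
    -- conclude |Lm m - L| ≤ ε
    have h1 : Lm m ≤ L + ε := by
      have hle : ∀ᶠ t : ℝ in atTop, gm m t ≤ g t + ε :=
        hest.mono fun t ht => by
          have := (abs_le.1 ht).2; linarith
      have hcv : IsCoboundedUnder (· ≥ ·) atTop (fun t => g t + ε) := by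
        refine IsBoundedUnder.isCoboundedUnder_ge ⟨B + ε, eventually_map.mpr ?_⟩
        exact hgB.mono fun t ht => by have := (abs_le.1 ht).2; linarith
      have := Filter.liminf_le_liminf hle (hbdd_ge _ (hgmB m)) hcv
      rwa [liminf_add_const atTop g ε (hcob g hgB) (hbdd_ge g hgB)] at this
    have h2 : L ≤ Lm m + ε := by
      have hle : ∀ᶠ t : ℝ in atTop, g t ≤ gm m t + ε :=
        hest.mono fun t ht => by
          have := (abs_le.1 ht).1; linarith
      have hcv : IsCoboundedUnder (· ≥ ·) atTop (fun t => gm m t + ε) := by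
        refine IsBoundedUnder.isCoboundedUnder_ge ⟨B + ε, eventually_map.mpr ?_⟩
        exact (hgmB m).mono fun t ht => by have := (abs_le.1 ht).2; linarith
      have := Filter.liminf_le_liminf hle (hbdd_ge _ hgB) hcv
      rwa [liminf_add_const atTop (gm m) ε (hcob _ (hgmB m)) (hbdd_ge _ (hgmB m))] at this
    rw [abs_sub_le_iff]
    constructor <;> linarith
  -- real convergence
  have hreal : Filter.Tendsto Lm atTop (nhds L) := by
    rw [Metric.tendsto_atTop]
    intro ε hε
    obtain ⟨N, hN⟩ := (hmain (ε/2) (by linarith)).exists_forall_of_atTop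
    exact ⟨N, fun n hn => by
      have := hN n hn
      rw [Real.dist_eq]
      linarith⟩
  -- transfer to EReal
  have heq : (fun m : ℕ =>
      Filter.liminf (fun t : ℝ => ((F (useq m t) / t : ℝ) : EReal)) Filter.atTop)
      = fun m : ℕ => ((Lm m : ℝ) : EReal) := by
    funext m
    exact hcoe (gm m) (hgmB m)
  rw [heq, hcoe g hgB]
  exact EReal.tendsto_coe.mpr hreal
end
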